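/- Let Z be a CAT(1) space in which the spherical core C_Z (the set of all suspenders in Z) is nonempty. Then C_Z is closed in Z. Moreover, if (p_k) is a sequence in C_Z converging to p, and q_k denotes the point opposite to p_k, then (q_k) is a Cauchy sequence whose limit q satisfies d(p,z) + d(z,q) = π for all z ∈ Z. -/
import Mathlib


open Real Metric

/-- A metric space is `CAT(1)` if every pair of points at distance `< π` has a midpoint
satisfying the spherical comparison (CN-type) inequality against triangles of perimeter
`< 2π` in the unit sphere. -/
def IsCATOne (Z : Type*) [MetricSpace Z] : Prop :=
  ∀ x y : Z, dist x y < π →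
    ∃ m : Z, dist x m = dist x y / 2 ∧ dist m y = dist x y / 2 ∧
      ∀ p : Z, dist p x + dist x y + dist y p < 2 * π →
        (Real.cos (dist p x) + Real.cos (dist p y)) / 2 ≤
          Real.cos (dist p m) * Real.cos (dist x y / 2)

/-- `p` is a suspender: there is `q` with `d(p,z) + d(z,q) = π` for every `z`. -/
def Suspender {Z : Type*} [MetricSpace Z] (p : Z) : Prop :=
  ∃ q : Z, ∀ z : Z, dist p z + dist z q = π

/-- In a (complete) CAT(1) space whose spherical core (the set of suspenders) is nonempty,
the spherical core is closed; moreover if suspenders `p_k` (with opposites `q_k`) converge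
to `p`, then `(q_k)` is Cauchy and its limit `q` satisfies `d(p,z) + d(z,q) = π` for all
`z`. -/

lemma susp_main {Z : Type*} [MetricSpace Z] [CompleteSpace Z]
    (p q : ℕ → Z) (plim : Z)
    (hpq : ∀ k, ∀ z : Z, dist (p k) z + dist z (q k) = π)
    (hp : Filter.Tendsto p Filter.atTop (nhds plim)) :
    CauchySeq q ∧ ∃ qlim : Z, Filter.Tendsto q Filter.atTop (nhds qlim) ∧
      ∀ z : Z, dist plim z + dist z qlim = π := by
  have key : ∀ k l, dist (q k) (q l) = dist (p k) (p l) := by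
    intro k l
    have h1 := hpq k (q l)
    have h2 := hpq l (p k)
    have : dist (q l) (q k) = dist (p l) (p k) := by
      have := dist_comm (p k) (q l)
      linarith [dist_comm (p k) (q l)]
    rw [dist_comm (q k), dist_comm (p k)]; exact this
  have hpc : CauchySeq p := hp.cauchySeq
  have hqc : CauchySeq q := by
    rw [Metric.cauchySeq_iff] at hpc ⊢
    intro ε hε
    obtain ⟨N, hN⟩ := hpc ε hε
    exact ⟨N, fun m hm n hn => by rw [key]; exact hN m hm n hn⟩
  obtain ⟨qlim, hq⟩ := cauchySeq_tendsto_of_complete hqc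
  refine ⟨hqc, qlim, hq, fun z => ?_⟩
  have h1 : Filter.Tendsto (fun k => dist (p k) z + dist z (q k)) Filter.atTop
      (nhds (dist plim z + dist z qlim)) :=
    ((hp.dist tendsto_const_nhds).add (tendsto_const_nhds.dist hq))
  have h2 : Filter.Tendsto (fun k => dist (p k) z + dist z (q k)) Filter.atTop
      (nhds π) := by simp [hpq _ z]
  exact tendsto_nhds_unique h1 h2

theorem stmt_12 {Z : Type*} [MetricSpace Z] [CompleteSpace Z] (hZ : IsCATOne Z)
    (hne : ∃ p : Z, Suspender p) :
    IsClosed {p : Z | Suspender p} ∧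
    ∀ (p q : ℕ → Z) (plim : Z),
      (∀ k, ∀ z : Z, dist (p k) z + dist z (q k) = π) →
      Filter.Tendsto p Filter.atTop (nhds plim) →
      CauchySeq q ∧ ∃ qlim : Z, Filter.Tendsto q Filter.atTop (nhds qlim) ∧
        ∀ z : Z, dist plim z + dist z qlim = π := by

  constructor
  · rw [← isSeqClosed_iff_isClosed]
    intro p plim hmem hp
    choose q hq using hmem
    obtain ⟨_, qlim, _, hfin⟩ := susp_main p q plim hq hp
    exact ⟨qlim, hfin⟩
  · intro p q plim hpq hp
    exact susp_main p q plim hpq hp
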